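/- arXiv:1607.06344 — 2 statements merged into one kernel-verified Lean document; each statement's English description precedes it below -/
import Mathlib

section
/- Let f : X → ℝⁿ be simplexwise α-Lipschitz with respect to the ℓ_p norm, p ∈ [1,∞], and let A_r be the subcomplex spanned by vertices with |f(v)|_p ≥ r. If r > α n^{1/p}/2, then the vertex approximation f', which sends each vertex v of A_r to s_j e_j where j is an index of the largest-absolute-value component of f(v) and s_j its sign, is a simplicial map from A_r to the boundary complex Σ^{n−1} of the n-dimensional cross-polytope. -/
open scoped ENNReal

/-- For a simplexwise `α`-Lipschitz map `f : X → ℝⁿ` (ℓ_p norm, modelled by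
`PiLp p`), if `r > α n^{1/p} / 2` then the vertex approximation — sending a vertex `v` to the
signed unit vector `s v • e_{j v}` where `j v` is an index of a largest-absolute-value component
of `f v` and `s v` its sign — is a simplicial map from `A_r` to the boundary `Σ^{n-1}` of the
cross-polytope: no simplex of `A_r` (a simplex all of whose vertices have `‖f v‖ ≥ r`) has two
vertices mapped to an antipodal pair `±e_j`. -/
theorem stmt1 {X : Type*} (n : ℕ) (p : ℝ≥0∞) [Fact (1 ≤ p)]
    (S : Set (Set X)) (V : Set X)
    (f : X → PiLp p (fun _ : Fin n => ℝ))
    (α : ℝ)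
    (hLip : ∀ σ ∈ S, ∀ x ∈ σ, ∀ y ∈ σ, ‖f x - f y‖ ≤ α)
    (j : X → Fin n) (s : X → Bool)
    (hj : ∀ v ∈ V, ∀ i : Fin n,
      |WithLp.equiv p (Fin n → ℝ) (f v) i| ≤ |WithLp.equiv p (Fin n → ℝ) (f v) (j v)|)
    (hs : ∀ v ∈ V, (s v = true ↔ 0 ≤ WithLp.equiv p (Fin n → ℝ) (f v) (j v)))
    (r : ℝ) (hr : α * (n : ℝ) ^ ((1 / p).toReal) / 2 < r) :
    ∀ σ ∈ S, (∀ v ∈ σ ∩ V, r ≤ ‖f v‖) →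
      ∀ u ∈ σ ∩ V, ∀ w ∈ σ ∩ V, ¬(j u = j w ∧ s u ≠ s w) := by
  intro σ hσ hrσ u hu w hw
  rintro ⟨hjuw, hsuw⟩
  rcases Nat.eq_zero_or_pos n with hn | hn
  · exact absurd (j u).isLt (by omega)
  set c : ℝ := (n : ℝ) ^ ((1 / p).toReal) with hc
  have hcpos : 0 < c := Real.rpow_pos_of_pos (by exact_mod_cast hn) _
  -- coordinate value bound from below: r ≤ c * |(f v) (j v)|
  have key : ∀ v ∈ σ ∩ V, r ≤ c * |WithLp.equiv p (Fin n → ℝ) (f v) (j v)| := by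
    intro v hv
    have h1 := (PiLp.antilipschitzWith_ofLp p (fun _ : Fin n => ℝ)).le_mul_dist (f v) 0
    simp only [dist_zero_right, map_zero, Fintype.card_fin] at h1
    have h2 : ‖WithLp.equiv p (Fin n → ℝ) (f v)‖ ≤ |WithLp.equiv p (Fin n → ℝ) (f v) (j v)| := by
      refine (pi_norm_le_iff_of_nonneg
        (abs_nonneg (WithLp.equiv p (Fin n → ℝ) (f v) (j v)))).mpr fun i => ?_
      simpa [Real.norm_eq_abs] using hj v hv.2 i
    have h3 : ‖f v‖ ≤ c * |WithLp.equiv p (Fin n → ℝ) (f v) (j v)| := by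
      calc ‖f v‖ ≤ (((n : NNReal) ^ (1 / p).toReal : NNReal) : ℝ) *
            ‖WithLp.equiv p (Fin n → ℝ) (f v)‖ := by
            simpa [dist_zero_right] using h1
        _ ≤ c * |WithLp.equiv p (Fin n → ℝ) (f v) (j v)| := by
            rw [hc]
            push_cast [NNReal.coe_rpow]
            gcongr
    exact le_trans (hrσ v hv) h3
  set a : ℝ := WithLp.equiv p (Fin n → ℝ) (f u) (j u) with ha
  set b : ℝ := WithLp.equiv p (Fin n → ℝ) (f w) (j u) with hb
  have hbw : b = WithLp.equiv p (Fin n → ℝ) (f w) (j w) := by rw [hb, hjuw]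
  have hku : r ≤ c * |a| := key u hu
  have hkw : r ≤ c * |b| := by rw [hbw]; exact key w hw
  -- sup-norm coordinate bound: |a - b| ≤ ‖f u - f w‖ ≤ α
  have hαb : |a - b| ≤ α := by
    have h4 := (PiLp.lipschitzWith_ofLp p (fun _ : Fin n => ℝ)).dist_le_mul (f u) (f w)
    have h5 : dist a b ≤ dist (WithLp.equiv p (Fin n → ℝ) (f u))
        (WithLp.equiv p (Fin n → ℝ) (f w)) := dist_le_pi_dist _ _ (j u)
    have h6 : dist (f u) (f w) ≤ α := by
      rw [dist_eq_norm]; exact hLip σ hσ u hu.1 w hw.1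
    have h7 : dist (WithLp.equiv p (Fin n → ℝ) (f u))
        (WithLp.equiv p (Fin n → ℝ) (f w)) ≤ dist (f u) (f w) := by
      simpa using h4
    calc |a - b| = dist a b := (Real.dist_eq a b).symm
      _ ≤ α := (h5.trans h7).trans h6
  -- opposite signs give |a| + |b| ≤ |a - b|
  have hsum : |a| + |b| ≤ |a - b| := by
    have hsu := hs u hu.2
    have hsw := hs w hw.2
    rw [← ha] at hsu
    rw [← hbw] at hsw
    have hsw2 : s w = !(s u) := by
      cases hsu' : s u <;> cases hsw' : s w <;> simp_all
    cases h : s u with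
    | false =>
      have hb0 : 0 ≤ b := hsw.mp (by rw [hsw2, h]; rfl)
      have ha0 : a < 0 := by
        by_contra hcon
        have : s u = true := hsu.mpr (not_lt.mp hcon)
        rw [h] at this; exact Bool.noConfusion this
      rw [abs_of_neg ha0, abs_of_nonneg hb0, abs_of_nonpos (by linarith)]
      linarith
    | true =>
      have ha0 : 0 ≤ a := hsu.mp h
      have hb0 : b < 0 := by
        by_contra hcon
        have : s w = true := hsw.mpr (not_lt.mp hcon)
        rw [hsw2, h] at this; exact Bool.noConfusion this
      rw [abs_of_nonneg ha0, abs_of_neg hb0, abs_of_nonneg (by linarith)]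
      linarith
  -- conclude
  have hfin : 2 * r ≤ c * α := by
    calc 2 * r ≤ c * |a| + c * |b| := by linarith
      _ = c * (|a| + |b|) := by ring
      _ ≤ c * |a - b| := by gcongr
      _ ≤ c * α := by gcongr
  nlinarith
end

section
/- Let u, v be adjacent vertices of a simplicial complex X and f : X → ℝⁿ simplexwise α-Lipschitz for the ℓ_p norm, with |f(u)|_p ≥ r and |f(v)|_p ≥ r for some r > α n^{1/p}/2. Then the vertex approximation cannot assign f'(v) = e_j and f'(u) = −e_j for any j; i.e., adjacent vertices are never mapped to antipodal cross-polytope vertices. -/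
open scoped ENNReal

/-- Let `u, v` be adjacent vertices (values `a = f u`, `b = f v` with
`‖a - b‖_p ≤ α`), both with ℓ_p norm at least `r > α n^{1/p} / 2`. Then the vertex
approximation cannot map them to antipodal cross-polytope vertices: if `f'(u) = -e_{ja}`
(component `ja` maximal in absolute value and negative) and `f'(v) = e_{jb}` (component `jb`
maximal and nonnegative), then `ja ≠ jb`. -/
theorem stmt4 (n : ℕ) (p : ℝ≥0∞) [Fact (1 ≤ p)]
    (a b : PiLp p (fun _ : Fin n => ℝ)) (α r : ℝ)
    (hadj : ‖a - b‖ ≤ α)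
    (hra : r ≤ ‖a‖) (hrb : r ≤ ‖b‖)
    (hr : α * (n : ℝ) ^ ((1 / p).toReal) / 2 < r)
    (ja jb : Fin n)
    (hja : ∀ i : Fin n,
      |WithLp.equiv p (Fin n → ℝ) a i| ≤ |WithLp.equiv p (Fin n → ℝ) a ja|)
    (hjb : ∀ i : Fin n,
      |WithLp.equiv p (Fin n → ℝ) b i| ≤ |WithLp.equiv p (Fin n → ℝ) b jb|)
    (hsa : WithLp.equiv p (Fin n → ℝ) a ja < 0)
    (hsb : 0 ≤ WithLp.equiv p (Fin n → ℝ) b jb) :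
    ja ≠ jb := by
  intro hjj
  subst hjj
  have hn : 0 < n := Fin.pos ja
  set e : ℝ := ((1/p).toReal) with he
  set A := WithLp.equiv p (Fin n → ℝ) a with hA
  set B := WithLp.equiv p (Fin n → ℝ) b with hB
  -- component distance bound
  have hcomp : |A ja - B ja| ≤ α := by
    have h1 : dist (A ja) (B ja) ≤ dist A B := dist_le_pi_dist A B ja
    have h2 : dist A B ≤ dist a b := by
      simpa [hA, hB] using (PiLp.lipschitzWith_ofLp p (fun _ : Fin n => ℝ)).dist_le_mul a b
    calc |A ja - B ja| = dist (A ja) (B ja) := (Real.dist_eq _ _).symm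
      _ ≤ dist a b := h1.trans h2
      _ = ‖a - b‖ := dist_eq_norm a b
      _ ≤ α := hadj
  -- norm bounds via antilipschitz
  have hKa : ‖a‖ ≤ (n : ℝ) ^ e * ‖A‖ := by
    have := (PiLp.antilipschitzWith_ofLp p (fun _ : Fin n => ℝ)).le_mul_dist a 0
    simpa [dist_eq_norm, he, hA] using this
  have hKb : ‖b‖ ≤ (n : ℝ) ^ e * ‖B‖ := by
    have := (PiLp.antilipschitzWith_ofLp p (fun _ : Fin n => ℝ)).le_mul_dist b 0
    simpa [dist_eq_norm, he, hB] using this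
  have hAmax : ‖A‖ ≤ |A ja| := by
    refine (pi_norm_le_iff_of_nonneg (abs_nonneg _)).2 fun i => ?_
    simpa using hja i
  have hBmax : ‖B‖ ≤ |B ja| := by
    refine (pi_norm_le_iff_of_nonneg (abs_nonneg _)).2 fun i => ?_
    simpa using hjb i
  have hne : (0 : ℝ) < (n : ℝ) ^ e := by positivity
  have h1 : r ≤ (n : ℝ) ^ e * |A ja| :=
    hra.trans (hKa.trans (by nlinarith [norm_nonneg A]))
  have h2 : r ≤ (n : ℝ) ^ e * |B ja| :=
    hrb.trans (hKb.trans (by nlinarith [norm_nonneg B]))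
  have ha2 : α / 2 < |A ja| := by nlinarith
  have hb2 : α / 2 < |B ja| := by nlinarith
  rw [abs_of_neg hsa] at ha2
  rw [abs_of_nonneg hsb] at hb2
  have := abs_le.1 hcomp
  linarith [this.1, this.2]
end
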